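/- Let W = 1 and 2 ≤ d < ∞, and let Φ : ℝ → ℝ^d be C¹. Then the set F_Φ of learnable targets has Lebesgue measure 0 in ℝ^d. -/

import Mathlib

open MeasureTheory Filter Topology Set

/-- The square loss for a one-parameter model. -/
noncomputable def loss1 {d : ℕ} (Φ : ℝ → EuclideanSpace ℝ (Fin d))
    (f : EuclideanSpace ℝ (Fin d)) (w : ℝ) : ℝ :=
  (1 / 2) * ‖f - Φ w‖ ^ 2

/-- The set of targets learnable by gradient flow for a one-parameter model. -/
def learnableSet1 {d : ℕ} (Φ : ℝ → EuclideanSpace ℝ (Fin d)) :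
    Set (EuclideanSpace ℝ (Fin d)) :=
  {f | ∃ w : ℝ → ℝ, w 0 = 0 ∧
    (∀ t ≥ (0 : ℝ), HasDerivAt w (-(deriv (loss1 Φ f) (w t))) t) ∧
    (⨅ t : Set.Ici (0 : ℝ), loss1 Φ f (w t)) = 0}

/-- If `g ∘ w → f` along `atTop`, `w` is continuous on `[0, ∞)` and `w → +∞`, then `g → f`
at `+∞`, because by the intermediate value theorem `w` eventually attains every large value. -/
lemma aux_reach {E : Type*} [PseudoMetricSpace E] {w : ℝ → ℝ} {g : ℝ → E} {f : E}
    (hw : ContinuousOn w (Ici 0)) (hg : Tendsto (fun t => g (w t)) atTop (𝓝 f))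
    (hwt : Tendsto w atTop atTop) : Tendsto g atTop (𝓝 f) := by
  rw [Metric.tendsto_atTop] at hg ⊢
  intro ε hε
  obtain ⟨T, hT⟩ := hg ε hε
  refine ⟨w (max T 0), fun s hs => ?_⟩
  obtain ⟨t2, hws, ht2⟩ := ((hwt.eventually_ge_atTop s).and (eventually_ge_atTop (max T 0))).exists
  have hsub : Icc (max T 0) t2 ⊆ Ici 0 := fun x hx => le_trans (le_max_right T 0) hx.1
  obtain ⟨t, ht, hwts⟩ := intermediate_value_Icc ht2 (hw.mono hsub) (⟨hs, hws⟩ : s ∈ Icc _ _)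
  have := hT t (le_trans (le_max_left T 0) ht.1)
  rwa [hwts] at this

/-- The range of a `C¹` curve in `ℝ^d`, `d ≥ 2`, is Lebesgue-null. -/
lemma aux_range_null {d : ℕ} (hd : 2 ≤ d) (Φ : ℝ → EuclideanSpace ℝ (Fin d))
    (hΦ : ContDiff ℝ 1 Φ) : volume (range Φ) = 0 := by
  set e := (MeasurableEquiv.toLp 2 (Fin d → ℝ)).symm with he
  set Ψ : ℝ → (Fin d → ℝ) := fun t => e (Φ t) with hΨ
  have hΨc : ContDiff ℝ 1 Ψ := by
    have : Ψ = (PiLp.continuousLinearEquiv 2 ℝ (fun _ : Fin d => ℝ) :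
        EuclideanSpace ℝ (Fin d) →L[ℝ] (Fin d → ℝ)) ∘ Φ := rfl
    rw [this]
    exact (ContinuousLinearMap.contDiff _).comp hΦ
  have hdim : dimH (range Ψ) ≤ 1 := by
    simpa using hΨc.dimH_range_le
  have hlt : dimH (range Ψ) < ((d : NNReal) : ENNReal) := by
    refine lt_of_le_of_lt hdim ?_
    have h2 : (1 : NNReal) < (d : NNReal) := by exact_mod_cast lt_of_lt_of_le one_lt_two hd
    exact_mod_cast h2
  have hH : (μH[((d : NNReal) : ℝ)] : Measure (Fin d → ℝ)) (range Ψ) = 0 :=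
    hausdorffMeasure_of_dimH_lt hlt
  have hvol : (volume : Measure (Fin d → ℝ)) (range Ψ) = 0 := by
    rw [← hausdorffMeasure_pi_real (ι := Fin d)]
    simpa using hH
  have hpre : e ⁻¹' (range Ψ) = range Φ := by
    ext x
    simp only [mem_preimage, mem_range, hΨ]
    constructor
    · rintro ⟨t, ht⟩; exact ⟨t, e.injective ht⟩
    · rintro ⟨t, rfl⟩; exact ⟨t, rfl⟩
  calc volume (range Φ) = volume (e ⁻¹' range Ψ) := by rw [hpre]
    _ = volume (range Ψ) :=
      (EuclideanSpace.volume_preserving_symm_measurableEquiv_toLp (Fin d)).measure_preimage_equiv _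
    _ = 0 := hvol

/-- A subsingleton in `ℝ^d`, `d ≥ 1`, is Lebesgue-null. -/
lemma aux_subsingleton_null {d : ℕ} (hd : 1 ≤ d) {S : Set (EuclideanSpace ℝ (Fin d))}
    (hS : S.Subsingleton) : volume S = 0 := by
  haveI : Nonempty (Fin d) := ⟨⟨0, hd⟩⟩
  rcases S.eq_empty_or_nonempty with rfl | ⟨p, hp⟩
  · simp
  · refine measure_mono_null (fun q hq => mem_singleton_iff.mpr (hS hq hp)) ?_
    set e := (MeasurableEquiv.toLp 2 (Fin d → ℝ)).symm with he
    have h1 : e ⁻¹' {e p} = {p} := by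
      ext x; simp [he]; exact (WithLp.ofLp_injective 2).eq_iff
    have h2 := (EuclideanSpace.volume_preserving_symm_measurableEquiv_toLp
      (Fin d)).measure_preimage_equiv ({e p} : Set (Fin d → ℝ))
    rw [h1] at h2
    rw [h2, measure_singleton]

/-- For `W = 1` and `d ≥ 2`, the set of gradient-flow learnable targets has Lebesgue
measure zero. -/
theorem one_param_learnable_measure_zero (d : ℕ) (hd : 2 ≤ d)
    (Φ : ℝ → EuclideanSpace ℝ (Fin d))
    (hΦ : ContDiff ℝ 1 Φ) (hlip : LocallyLipschitz (deriv Φ)) :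
    MeasureTheory.volume (learnableSet1 Φ) = 0 := by
  have h1d : (1 : ℕ) ≤ d := le_trans one_le_two hd
  have hsub : learnableSet1 Φ ⊆
      range Φ ∪ ({p | Tendsto Φ atTop (𝓝 p)} ∪ {p | Tendsto Φ atBot (𝓝 p)}) := by
    rintro f ⟨w, hw0, hw, hinf⟩
    have hwc : ContinuousOn w (Ici 0) := fun t ht => ((hw t ht).continuousAt).continuousWithinAt
    have hLd : ∀ s, DifferentiableAt ℝ (loss1 Φ f) s := by
      intro s
      have h1 : DifferentiableAt ℝ (fun s => ‖f - Φ s‖ ^ 2) s :=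
        DifferentiableAt.norm_sq (𝕜 := ℝ)
          ((differentiableAt_const f).sub (hΦ.differentiable one_ne_zero s))
      exact h1.const_mul _
    have hcomp : ∀ t ≥ (0 : ℝ), HasDerivAt (fun t => loss1 Φ f (w t))
        (deriv (loss1 Φ f) (w t) * (-(deriv (loss1 Φ f) (w t)))) t := fun t ht =>
      ((hLd (w t)).hasDerivAt).comp t (hw t ht)
    have hanti : AntitoneOn (fun t => loss1 Φ f (w t)) (Ici 0) := by
      apply antitoneOn_of_deriv_nonpos (convex_Ici 0)
      · exact fun t ht => ((hcomp t ht).continuousAt).continuousWithinAt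
      · intro t ht
        rw [interior_Ici] at ht
        exact ((hcomp t ht.le).differentiableAt).differentiableWithinAt
      · intro t ht
        rw [interior_Ici] at ht
        rw [(hcomp t ht.le).deriv]
        nlinarith [sq_nonneg (deriv (loss1 Φ f) (w t))]
    have hnonneg : ∀ t, 0 ≤ loss1 Φ f (w t) := fun t => by
      unfold loss1; positivity
    have hh0 : Tendsto (fun t => loss1 Φ f (w t)) atTop (𝓝 0) := by
      rw [Metric.tendsto_atTop]
      intro ε hε
      haveI : Nonempty (Set.Ici (0 : ℝ)) := ⟨⟨0, Set.self_mem_Ici⟩⟩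
      have hlt : (⨅ t : Set.Ici (0 : ℝ), loss1 Φ f (w t)) < ε := by rw [hinf]; exact hε
      obtain ⟨⟨t0, ht0⟩, hlt0⟩ := exists_lt_of_ciInf_lt hlt
      refine ⟨t0, fun t ht => ?_⟩
      have h1 : loss1 Φ f (w t) ≤ loss1 Φ f (w t0) :=
        hanti ht0 (le_trans ht0 ht) ht
      rw [Real.dist_eq, sub_zero, abs_of_nonneg (hnonneg t)]
      exact lt_of_le_of_lt h1 hlt0
    have hΦw : Tendsto (fun t => Φ (w t)) atTop (𝓝 f) := by
      have hn2 : Tendsto (fun t => ‖f - Φ (w t)‖ ^ 2) atTop (𝓝 0) := by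
        have heq : (fun t => ‖f - Φ (w t)‖ ^ 2) = fun t => 2 * loss1 Φ f (w t) := by
          funext t; unfold loss1; ring
        rw [heq]
        simpa using hh0.const_mul 2
      have hn : Tendsto (fun t => ‖f - Φ (w t)‖) atTop (𝓝 0) := by
        have h3 := hn2.sqrt
        simp only [Real.sqrt_zero] at h3
        have h4 : (fun t => Real.sqrt (‖f - Φ (w t)‖ ^ 2)) = fun t => ‖f - Φ (w t)‖ := by
          funext t; rw [Real.sqrt_sq (norm_nonneg _)]
        rwa [h4] at h3
      rw [tendsto_iff_norm_sub_tendsto_zero]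
      simpa [norm_sub_rev] using hn
    by_cases hc : ∃ c : ℝ, MapClusterPt c atTop w
    · obtain ⟨c, hcc⟩ := hc
      left
      refine ⟨c, ?_⟩
      have h2 : MapClusterPt (Φ c) atTop (Φ ∘ w) :=
        hcc.continuousAt_comp (hΦ.continuous.continuousAt)
      have hne : NeBot (𝓝 (Φ c) ⊓ 𝓝 f) := by
        have h3 : NeBot (𝓝 (Φ c) ⊓ map (Φ ∘ w) atTop) := h2
        exact neBot_of_le (hf := h3) (inf_le_inf_left _ hΦw)
      exact t2_iff_nhds.mp inferInstance hne
    · push_neg at hc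
      have habs : Tendsto (fun t => |w t|) atTop atTop := by
        rw [tendsto_atTop]
        intro M
        by_contra hM
        rw [not_eventually] at hM
        have hfreq : ∃ᶠ t in atTop, w t ∈ Icc (-|M|-1) (|M|+1) := by
          refine hM.mono fun t ht => ?_
          rw [not_le] at ht
          have h5 : |w t| ≤ |M| := le_trans ht.le (le_abs_self M)
          rw [abs_le] at h5
          constructor <;> linarith [h5.1, h5.2]
        have hfreq2 : ∃ᶠ x in map w atTop, x ∈ Icc (-|M|-1) (|M|+1) := by
          rwa [frequently_map]
        have hnb : NeBot (map w atTop ⊓ 𝓟 (Icc (-|M|-1) (|M|+1))) :=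
          Filter.frequently_mem_iff_neBot.mp hfreq2
        obtain ⟨c, _, hcl⟩ := (isCompact_Icc (a := -|M|-1) (b := |M|+1)).exists_clusterPt
          (f := map w atTop ⊓ 𝓟 (Icc (-|M|-1) (|M|+1))) inf_le_right
        exact hc c (hcl.mono inf_le_left)
      obtain ⟨T, hT⟩ := eventually_atTop.1
        ((habs.eventually_ge_atTop 1).and (eventually_ge_atTop (0 : ℝ)))
      have hT0 : (0 : ℝ) ≤ T := (hT T le_rfl).2
      have hne0 : ∀ t ≥ T, w t ≠ 0 := by
        intro t ht h0
        have := (hT t ht).1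
        rw [h0] at this
        norm_num at this
      have hIcc : ∀ t ≥ T, Icc T t ⊆ Ici (0 : ℝ) := fun t _ x hx => le_trans hT0 hx.1
      rcases (hne0 T le_rfl).lt_or_gt with hTneg | hTpos
      · -- w is eventually negative, so w → -∞
        have hneg' : ∀ t ≥ T, w t < 0 := by
          intro t ht
          rcases (hne0 t ht).lt_or_gt with h | h
          · exact h
          · exfalso
            obtain ⟨t1, ht1, hwt1⟩ := intermediate_value_Icc ht (hwc.mono (hIcc t ht))
              (⟨hTneg.le, h.le⟩ : (0 : ℝ) ∈ Icc (w T) (w t))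
            exact hne0 t1 ht1.1 hwt1
        have hwa : Tendsto (fun t => -(w t)) atTop atTop := by
          rw [tendsto_atTop]
          intro M
          filter_upwards [habs.eventually_ge_atTop M, eventually_ge_atTop T] with t h1 h2
          rwa [abs_of_neg (hneg' t h2)] at h1
        have hres : Tendsto (fun s => Φ (-s)) atTop (𝓝 f) := by
          refine aux_reach (w := fun t => -(w t)) hwc.neg ?_ hwa
          simpa [neg_neg] using hΦw
        right; right
        show Tendsto Φ atBot (𝓝 f)
        have h6 := hres.comp tendsto_neg_atBot_atTop
        simpa [Function.comp_def] using h6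
      · -- w is eventually positive, so w → +∞
        have hpos' : ∀ t ≥ T, 0 < w t := by
          intro t ht
          rcases (hne0 t ht).lt_or_gt with h | h
          · exfalso
            obtain ⟨t1, ht1, hwt1⟩ := intermediate_value_Icc' ht (hwc.mono (hIcc t ht))
              (⟨h.le, hTpos.le⟩ : (0 : ℝ) ∈ Icc (w t) (w T))
            exact hne0 t1 ht1.1 hwt1
          · exact h
        have hwa : Tendsto w atTop atTop := by
          rw [tendsto_atTop]
          intro M
          filter_upwards [habs.eventually_ge_atTop M, eventually_ge_atTop T] with t h1 h2
          rwa [abs_of_pos (hpos' t h2)] at h1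
        right; left
        exact aux_reach hwc hΦw hwa
  refine measure_mono_null hsub ?_
  refine measure_union_null (aux_range_null hd Φ hΦ) (measure_union_null ?_ ?_)
  · exact aux_subsingleton_null h1d fun p hp q hq => tendsto_nhds_unique hp hq
  · exact aux_subsingleton_null h1d fun p hp q hq => tendsto_nhds_unique hp hq
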